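/- arXiv:2310.05792 — 3 statements merged into one kernel-verified Lean document; each statement's English description precedes it below -/
import Mathlib

section
/- Let d ≥ 1, δ > 0, and let L : ℝ^d → ℝ be L̄-Lipschitz continuous (and bounded). Define L_δ(θ) := E_{w∼Unif(𝔹^d)}[L(θ + δ w)]. Then the gradient of L_δ is (d/δ)·L̄-Lipschitz; that is, for all θ₁, θ₂ ∈ ℝ^d, ‖∇L_δ(θ₁) − ∇L_δ(θ₂)‖ ≤ (d/δ) L̄ ‖θ₁ − θ₂‖. -/
open MeasureTheory Metric
open scoped Pointwise
open InnerProductSpace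

/-- The uniform probability distribution on the closed unit ball of `ℝ^d`. -/
noncomputable def unifBall (d : ℕ) : Measure (EuclideanSpace ℝ (Fin d)) :=
  (volume (closedBall (0 : EuclideanSpace ℝ (Fin d)) 1))⁻¹ •
    volume.restrict (closedBall (0 : EuclideanSpace ℝ (Fin d)) 1)

section Aux

open MeasureTheory Metric Finset in
theorem pow_sub_pow_le' {a b : ℝ} (n : ℕ) (hb : 0 ≤ b) (hab : b ≤ a) :
    a ^ n - b ^ n ≤ n * (a - b) * a ^ (n - 1) := by
  have ha : 0 ≤ a := hb.trans hab
  have h := geom_sum₂_mul a b n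
  have hbound : ∑ i ∈ range n, a ^ i * b ^ (n - 1 - i) ≤ n * a ^ (n-1) := by
    calc ∑ i ∈ range n, a ^ i * b ^ (n - 1 - i)
        ≤ ∑ i ∈ range n, a ^ (n-1) := by
          apply Finset.sum_le_sum
          intro i hi
          have hi' : i + (n - 1 - i) = n - 1 := by
            have := Finset.mem_range.1 hi; omega
          calc a ^ i * b ^ (n-1-i) ≤ a ^ i * a ^ (n-1-i) := by
                apply mul_le_mul_of_nonneg_left (pow_le_pow_left₀ hb hab _) (pow_nonneg ha _)
            _ = a ^ (i + (n-1-i)) := (pow_add a _ _).symm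
            _ = a ^ (n-1) := by rw [hi']
      _ = n * a ^ (n-1) := by rw [Finset.sum_const, card_range, nsmul_eq_mul]
  calc a ^ n - b ^ n = (∑ i ∈ range n, a ^ i * b ^ (n - 1 - i)) * (a - b) := h.symm
    _ ≤ (n * a ^ (n-1)) * (a - b) := by
        apply mul_le_mul_of_nonneg_right hbound (by linarith)
    _ = n * (a - b) * a ^ (n-1) := by ring


variable {d : ℕ}
local notation "E" => EuclideanSpace ℝ (Fin d)

theorem vol_closedBall (x : E) {r : ℝ} (hr : 0 ≤ r) :
    volume (closedBall x r) =
      ENNReal.ofReal (r ^ d) * volume (closedBall (0 : E) 1) := by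
  have := Measure.addHaar_closedBall' (volume : Measure (EuclideanSpace ℝ (Fin d))) x hr
  rwa [finrank_euclideanSpace_fin] at this

theorem vol_unit_pos : 0 < volume (closedBall (0 : E) 1) :=
  measure_closedBall_pos _ _ one_pos

theorem vol_unit_ne_top : volume (closedBall (0 : E) 1) ≠ ⊤ :=
  (measure_closedBall_lt_top).ne

theorem side_bound {δ : ℝ} (hδ : 0 < δ) (θ₁ θ₂ : E) (h2 : dist θ₁ θ₂ ≤ 2 * δ) :
    (volume (closedBall θ₁ δ \ closedBall θ₂ δ)).toReal ≤
      δ ^ d * (volume (closedBall (0 : E) 1)).toReal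
        - (δ - dist θ₁ θ₂ / 2) ^ d * (volume (closedBall (0 : E) 1)).toReal := by
  set V := volume (closedBall (0 : E) 1) with hV
  set t := dist θ₁ θ₂ with htdef
  have ht0 : 0 ≤ t := dist_nonneg
  have hr0 : 0 ≤ δ - t / 2 := by linarith
  set m : E := midpoint ℝ θ₁ θ₂ with hm
  have hsub : closedBall m (δ - t / 2) ⊆ closedBall θ₁ δ ∩ closedBall θ₂ δ := by
    intro x hx
    rw [mem_closedBall] at hx
    have hd1 : dist m θ₁ = t / 2 := by
      rw [hm, dist_midpoint_left, htdef]
      norm_num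
      ring
    have hd2 : dist m θ₂ = t / 2 := by
      rw [hm, dist_midpoint_right, htdef]
      norm_num
      ring
    constructor <;> rw [mem_closedBall]
    · have := dist_triangle x m θ₁
      linarith
    · have := dist_triangle x m θ₂
      linarith
  have hsub1 : closedBall m (δ - t / 2) ⊆ closedBall θ₁ δ :=
    hsub.trans Set.inter_subset_left
  have hdiff : closedBall θ₁ δ \ closedBall θ₂ δ ⊆
      closedBall θ₁ δ \ closedBall m (δ - t / 2) := by
    intro x hx
    exact ⟨hx.1, fun hxm => hx.2 (hsub hxm).2⟩
  have hmono := measure_mono hdiff (μ := (volume : Measure (EuclideanSpace ℝ (Fin d))))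
  have hdm : volume (closedBall θ₁ δ \ closedBall m (δ - t / 2)) =
      volume (closedBall θ₁ δ) - volume (closedBall m (δ - t / 2)) :=
    measure_diff hsub1 measurableSet_closedBall.nullMeasurableSet
      measure_closedBall_lt_top.ne
  have h1 : volume (closedBall θ₁ δ) = ENNReal.ofReal (δ ^ d) * V := vol_closedBall θ₁ hδ.le
  have h2' : volume (closedBall m (δ - t / 2)) = ENNReal.ofReal ((δ - t/2) ^ d) * V :=
    vol_closedBall m hr0
  have hVne : V ≠ ⊤ := vol_unit_ne_top
  have hfin : volume (closedBall θ₁ δ) ≠ ⊤ := measure_closedBall_lt_top.ne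
  calc (volume (closedBall θ₁ δ \ closedBall θ₂ δ)).toReal
      ≤ (volume (closedBall θ₁ δ \ closedBall m (δ - t / 2))).toReal := by
        apply ENNReal.toReal_mono _ hmono
        exact ((measure_mono Set.diff_subset).trans_lt measure_closedBall_lt_top).ne
    _ = (volume (closedBall θ₁ δ)).toReal - (volume (closedBall m (δ - t / 2))).toReal := by
        rw [hdm, ENNReal.toReal_sub_of_le (measure_mono hsub1) hfin]
    _ = δ ^ d * V.toReal - (δ - t/2) ^ d * V.toReal := by
        rw [h1, h2', ENNReal.toReal_mul, ENNReal.toReal_mul,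
          ENNReal.toReal_ofReal (by positivity), ENNReal.toReal_ofReal (by positivity)]

theorem symmdiff_bound (hd : 1 ≤ d) {δ : ℝ} (hδ : 0 < δ) (θ₁ θ₂ : E) :
    (volume (closedBall θ₁ δ \ closedBall θ₂ δ)).toReal
      + (volume (closedBall θ₂ δ \ closedBall θ₁ δ)).toReal ≤
      d * dist θ₁ θ₂ * δ ^ (d - 1) * (volume (closedBall (0 : E) 1)).toReal := by
  set Vt := (volume (closedBall (0 : E) 1)).toReal with hVt
  have hVt0 : 0 ≤ Vt := ENNReal.toReal_nonneg
  set t := dist θ₁ θ₂ with htdef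
  have ht0 : 0 ≤ t := dist_nonneg
  have hδd1 : (0:ℝ) ≤ δ ^ (d-1) := by positivity
  have hpow : δ ^ d = δ ^ (d-1) * δ := by
    rw [← pow_succ]; congr 1; omega
  rcases le_or_gt t (2 * δ) with hc | hc
  · have hb1 := side_bound hδ θ₁ θ₂ hc
    have hb2 := side_bound hδ θ₂ θ₁ (by rwa [dist_comm])
    rw [dist_comm θ₂ θ₁] at hb2
    have hr0 : 0 ≤ δ - t / 2 := by linarith
    have hkey : δ ^ d - (δ - t/2) ^ d ≤ d * (t/2) * δ ^ (d-1) := by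
      have := pow_sub_pow_le' (a := δ) (b := δ - t/2) d hr0 (by linarith)
      calc δ ^ d - (δ - t/2) ^ d ≤ d * (δ - (δ - t/2)) * δ ^ (d-1) := this
        _ = d * (t/2) * δ ^ (d-1) := by ring_nf
    nlinarith [hb1, hb2, hkey]
  · have hone : ∀ θ θ' : E, (volume (closedBall θ δ \ closedBall θ' δ)).toReal ≤ δ ^ d * Vt := by
      intro θ θ'
      have hmono := measure_mono (μ := (volume : Measure (EuclideanSpace ℝ (Fin d))))
        (Set.diff_subset (s := closedBall θ δ) (t := closedBall θ' δ))
      have := ENNReal.toReal_mono measure_closedBall_lt_top.ne hmono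
      rw [vol_closedBall θ hδ.le, ENNReal.toReal_mul,
        ENNReal.toReal_ofReal (by positivity)] at this
      exact this
    have h1 := hone θ₁ θ₂
    have h2 := hone θ₂ θ₁
    have hd1 : (1:ℝ) ≤ d := by exact_mod_cast hd
    nlinarith [mul_nonneg hδd1 hVt0, mul_le_mul_of_nonneg_right (mul_le_mul_of_nonneg_right
      (hc.le.trans (le_mul_of_one_le_left ht0 hd1)) hδd1) hVt0]

theorem unifBall_isProb : IsProbabilityMeasure (unifBall d) := by
  constructor
  rw [unifBall, Measure.smul_apply, Measure.restrict_apply MeasurableSet.univ,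
    Set.univ_inter, smul_eq_mul,
    ENNReal.inv_mul_cancel (measure_closedBall_pos _ _ one_pos).ne'
      measure_closedBall_lt_top.ne]

variable {F : Type*} [NormedAddCommGroup F] [NormedSpace ℝ F]

theorem smul_cball {δ : ℝ} (hδ : 0 < δ) :
    δ • closedBall (0 : E) 1 = closedBall (0 : E) δ := by
  rw [_root_.smul_closedBall _ _ zero_le_one, smul_zero, Real.norm_eq_abs, abs_of_pos hδ, mul_one]

theorem preimage_add_cball (θ : E) (δ : ℝ) :
    (fun x => θ + x) ⁻¹' closedBall θ δ = closedBall (0 : E) δ := by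
  ext x
  simp [mem_closedBall, dist_eq_norm]

theorem integral_unifBall (f : E → F) (θ : E) {δ : ℝ} (hδ : 0 < δ) :
    ∫ w, f (θ + δ • w) ∂(unifBall d) =
      ((volume (closedBall (0 : E) 1)).toReal)⁻¹ •
        (δ ^ d)⁻¹ • ∫ x in closedBall θ δ, f x := by
  rw [unifBall, integral_smul_measure, ENNReal.toReal_inv]
  congr 1
  have h1 : ∫ w in closedBall (0 : E) 1, f (θ + δ • w) =
      (δ ^ d)⁻¹ • ∫ y in closedBall (0 : E) δ, f (θ + y) := by
    have := Measure.setIntegral_comp_smul_of_pos (volume : Measure (EuclideanSpace ℝ (Fin d)))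
      (fun y => f (θ + y)) (closedBall (0 : E) 1) hδ
    rw [finrank_euclideanSpace_fin, smul_cball hδ] at this
    exact this
  rw [h1]
  congr 1
  have hmp : MeasurePreserving (fun x : E => θ + x) volume volume :=
    measurePreserving_add_left volume θ
  have hemb : MeasurableEmbedding (fun x : E => θ + x) :=
    (MeasurableEquiv.addLeft θ).measurableEmbedding
  have := hmp.setIntegral_preimage_emb hemb f (closedBall θ δ)
  rw [preimage_add_cball] at this
  exact this

variable {L : EuclideanSpace ℝ (Fin d) → ℝ} {Lbar : ℝ}

theorem unifBall_ac : unifBall d ≪ (volume : Measure (EuclideanSpace ℝ (Fin d))) := by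
  intro s hs
  rw [unifBall, Measure.smul_apply, Measure.restrict_apply₀']
  · rw [measure_mono_null Set.inter_subset_left hs]
    simp
  · exact measurableSet_closedBall.nullMeasurableSet

variable {L : EuclideanSpace ℝ (Fin d) → ℝ} {Lbar : ℝ}

theorem lipW (hLip : ∀ x y : E, |L x - L y| ≤ Lbar * ‖x - y‖) :
    LipschitzWith (Real.nnabs Lbar) L := by
  apply LipschitzWith.of_dist_le_mul
  intro x y
  have h := hLip x y
  have : dist (L x) (L y) = |L x - L y| := Real.dist_eq _ _
  rw [this, dist_eq_norm]
  calc |L x - L y| ≤ Lbar * ‖x - y‖ := h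
    _ ≤ |Lbar| * ‖x - y‖ := by
        apply mul_le_mul_of_nonneg_right (le_abs_self _) (norm_nonneg _)
    _ = (Real.nnabs Lbar : ℝ) * ‖x - y‖ := by simp

theorem grad_norm_le (hLip : ∀ x y : E, |L x - L y| ≤ Lbar * ‖x - y‖) (x : E) :
    ‖gradient L x‖ ≤ |Lbar| := by
  rw [gradient, LinearIsometryEquiv.norm_map]
  have := norm_fderiv_le_of_lipschitz ℝ (lipW hLip) (x₀ := x)
  simpa using this

theorem ae_diff_smoothed {δ : ℝ} (hδ : 0 < δ)
    (hLip : ∀ x y : E, |L x - L y| ≤ Lbar * ‖x - y‖) (θ₀ : E) :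
    ∀ᵐ w ∂(unifBall d), DifferentiableAt ℝ L (θ₀ + δ • w) := by
  have hae : ∀ᵐ x ∂(volume : Measure (EuclideanSpace ℝ (Fin d))), DifferentiableAt ℝ L x :=
    (lipW hLip).ae_differentiableAt
  rw [ae_iff] at hae ⊢
  apply unifBall_ac
  set N := {x : E | ¬DifferentiableAt ℝ L x}
  have hpre : {w : E | ¬DifferentiableAt ℝ L (θ₀ + δ • w)} =
      (δ • ·) ⁻¹' ((θ₀ + ·) ⁻¹' N) := rfl
  rw [hpre, Measure.addHaar_preimage_smul _ hδ.ne']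
  have : volume ((θ₀ + ·) ⁻¹' N) = volume N := measure_preimage_add _ _ _
  rw [this, hae, mul_zero]

theorem hasGradientAt_smoothed {δ : ℝ} (hδ : 0 < δ)
    (hLip : ∀ x y : E, |L x - L y| ≤ Lbar * ‖x - y‖)
    (hLbdd : ∃ C : ℝ, ∀ θ, |L θ| ≤ C) (θ₀ : E) :
    HasGradientAt (fun θ : E => ∫ w, L (θ + δ • w) ∂(unifBall d))
      (∫ w, gradient L (θ₀ + δ • w) ∂(unifBall d)) θ₀ := by
  haveI : IsProbabilityMeasure (unifBall d) := unifBall_isProb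
  obtain ⟨C, hC⟩ := hLbdd
  have hLcont : Continuous L := (lipW hLip).continuous
  have hmeas_aff : ∀ x : E, AEStronglyMeasurable (fun w : E => L (x + δ • w)) (unifBall d) := by
    intro x
    exact (hLcont.comp (continuous_const.add (continuous_id.const_smul δ))).aestronglyMeasurable
  have key := hasFDerivAt_integral_of_dominated_loc_of_lip
    (μ := unifBall d) (x₀ := θ₀)
    (F := fun (x : E) (w : E) => L (x + δ • w))
    (F' := fun w : E => fderiv ℝ L (θ₀ + δ • w))
    (bound := fun _ => |Lbar|) (s := Metric.ball θ₀ 1) (Metric.ball_mem_nhds θ₀ one_pos)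
    (Filter.Eventually.of_forall fun x => hmeas_aff x)
    ?_ ?_ ?_ ?_ ?_
  · obtain ⟨hint, hfd⟩ := key
    rw [hasGradientAt_iff_hasFDerivAt]
    convert hfd using 1
    rotate_right
    have h1 : ∀ w : E, gradient L (θ₀ + δ • w) =
        (toDual ℝ (EuclideanSpace ℝ (Fin d))).symm (fderiv ℝ L (θ₀ + δ • w)) := fun w => rfl
    have h2 := LinearIsometry.integral_comp_comm
      (μ := unifBall d) (toDual ℝ (EuclideanSpace ℝ (Fin d))).symm.toLinearIsometry
      (fun w : E => fderiv ℝ L (θ₀ + δ • w))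
    calc (toDual ℝ (EuclideanSpace ℝ (Fin d)))
          (∫ w, gradient L (θ₀ + δ • w) ∂(unifBall d))
        = (toDual ℝ (EuclideanSpace ℝ (Fin d)))
          (∫ w, (toDual ℝ (EuclideanSpace ℝ (Fin d))).symm.toLinearIsometry
            (fderiv ℝ L (θ₀ + δ • w)) ∂(unifBall d)) := rfl
      _ = (toDual ℝ (EuclideanSpace ℝ (Fin d)))
          ((toDual ℝ (EuclideanSpace ℝ (Fin d))).symm.toLinearIsometry
            (∫ w, fderiv ℝ L (θ₀ + δ • w) ∂(unifBall d))) := by rw [h2]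
      _ = ∫ w, fderiv ℝ L (θ₀ + δ • w) ∂(unifBall d) := by
          simp [LinearIsometryEquiv.coe_toLinearIsometry]
    all_goals rfl
  · -- integrable F θ₀
    apply Integrable.mono' (integrable_const C) (hmeas_aff θ₀)
    filter_upwards with w
    simpa using hC (θ₀ + δ • w)
  · -- F' aestronglymeasurable
    apply Measurable.aestronglyMeasurable
    exact (measurable_fderiv ℝ L).comp ((measurable_id.const_smul δ).const_add θ₀)
  · -- lipschitz on ball
    filter_upwards with w
    apply LipschitzWith.lipschitzOnWith
    apply LipschitzWith.of_dist_le_mul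
    intro x y
    have h := hLip (x + δ • w) (y + δ • w)
    have hxy : (x + δ • w) - (y + δ • w) = x - y := by abel
    rw [Real.dist_eq, dist_eq_norm]
    calc |L (x + δ • w) - L (y + δ • w)| ≤ Lbar * ‖x - y‖ := by rwa [hxy] at h
      _ ≤ |Lbar| * ‖x - y‖ := mul_le_mul_of_nonneg_right (le_abs_self _) (norm_nonneg _)
      _ = (Real.nnabs |Lbar| : ℝ) * ‖x - y‖ := by simp
  · exact integrable_const _
  · -- a.e. HasFDerivAt
    filter_upwards [ae_diff_smoothed hδ hLip θ₀] with w hw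
    have h1 : HasFDerivAt L (fderiv ℝ L (θ₀ + δ • w)) (θ₀ + δ • w) := hw.hasFDerivAt
    have h2 : HasFDerivAt (fun x : E => x + δ • w)
        (ContinuousLinearMap.id ℝ (EuclideanSpace ℝ (Fin d))) θ₀ :=
      (hasFDerivAt_id θ₀).add_const (δ • w)
    have h3 := h1.comp θ₀ h2
    rwa [ContinuousLinearMap.comp_id] at h3

theorem Lbar_nonneg (hd : 1 ≤ d) (hLip : ∀ x y : E, |L x - L y| ≤ Lbar * ‖x - y‖) :
    0 ≤ Lbar := by
  have hx : ‖EuclideanSpace.single (⟨0, hd⟩ : Fin d) (1 : ℝ) - (0 : E)‖ = 1 := by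
    rw [sub_zero, EuclideanSpace.norm_single, norm_one]
  have h := hLip (EuclideanSpace.single (⟨0, hd⟩ : Fin d) (1 : ℝ)) 0
  rw [hx, mul_one] at h
  exact (abs_nonneg _).trans h

theorem integrableOn_grad (hLip : ∀ x y : E, |L x - L y| ≤ Lbar * ‖x - y‖)
    (s : Set E) (hs : volume s ≠ ⊤) : IntegrableOn (gradient L) s := by
  haveI : IsFiniteMeasure ((volume : Measure (EuclideanSpace ℝ (Fin d))).restrict s) :=
    ⟨by rwa [Measure.restrict_apply_univ, lt_top_iff_ne_top]⟩
  apply Integrable.mono' (integrable_const |Lbar|)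
  · apply Measurable.aestronglyMeasurable
    exact (LinearIsometryEquiv.continuous _).measurable.comp (measurable_fderiv ℝ L)
  · filter_upwards with x
    exact grad_norm_le hLip x

theorem setIntegral_grad_sub (hLip : ∀ x y : E, |L x - L y| ≤ Lbar * ‖x - y‖)
    {δ : ℝ} (hδ : 0 < δ) (θ₁ θ₂ : E) :
    ‖(∫ x in closedBall θ₁ δ, gradient L x) - ∫ x in closedBall θ₂ δ, gradient L x‖ ≤
      |Lbar| * ((volume (closedBall θ₁ δ \ closedBall θ₂ δ)).toReal
        + (volume (closedBall θ₂ δ \ closedBall θ₁ δ)).toReal) := by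
  set A₁ := closedBall θ₁ δ with hA₁
  set A₂ := closedBall θ₂ δ with hA₂
  have hfin : ∀ s : Set E, s ⊆ A₁ → volume s ≠ ⊤ := fun s hsub =>
    ((measure_mono hsub).trans_lt measure_closedBall_lt_top).ne
  have hfin' : ∀ s : Set E, s ⊆ A₂ → volume s ≠ ⊤ := fun s hsub =>
    ((measure_mono hsub).trans_lt measure_closedBall_lt_top).ne
  have h1 : ∫ x in A₁, gradient L x =
      (∫ x in A₁ ∩ A₂, gradient L x) + ∫ x in A₁ \ A₂, gradient L x := by
    rw [← setIntegral_union (Set.disjoint_sdiff_right.mono_left Set.inter_subset_right)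
      (measurableSet_closedBall.diff measurableSet_closedBall)
      (integrableOn_grad hLip _ (hfin _ Set.inter_subset_left))
      (integrableOn_grad hLip _ (hfin _ Set.diff_subset)), Set.inter_union_diff]
  have h2 : ∫ x in A₂, gradient L x =
      (∫ x in A₁ ∩ A₂, gradient L x) + ∫ x in A₂ \ A₁, gradient L x := by
    rw [Set.inter_comm]
    rw [← setIntegral_union (Set.disjoint_sdiff_right.mono_left Set.inter_subset_right)
      (measurableSet_closedBall.diff measurableSet_closedBall)
      (integrableOn_grad hLip _ (hfin' _ Set.inter_subset_left))
      (integrableOn_grad hLip _ (hfin' _ Set.diff_subset)), Set.inter_union_diff]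
  have hdiff : (∫ x in A₁, gradient L x) - ∫ x in A₂, gradient L x =
      (∫ x in A₁ \ A₂, gradient L x) - ∫ x in A₂ \ A₁, gradient L x := by
    rw [h1, h2]; abel
  rw [hdiff]
  have hb1 : ‖∫ x in A₁ \ A₂, gradient L x‖ ≤ |Lbar| * (volume (A₁ \ A₂)).toReal :=
    norm_setIntegral_le_of_norm_le_const
      ((measure_mono Set.diff_subset).trans_lt measure_closedBall_lt_top)
      (fun x _ => grad_norm_le hLip x)
  have hb2 : ‖∫ x in A₂ \ A₁, gradient L x‖ ≤ |Lbar| * (volume (A₂ \ A₁)).toReal :=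
    norm_setIntegral_le_of_norm_le_const
      ((measure_mono Set.diff_subset).trans_lt measure_closedBall_lt_top)
      (fun x _ => grad_norm_le hLip x)
  calc ‖(∫ x in A₁ \ A₂, gradient L x) - ∫ x in A₂ \ A₁, gradient L x‖
      ≤ ‖∫ x in A₁ \ A₂, gradient L x‖ + ‖∫ x in A₂ \ A₁, gradient L x‖ := norm_sub_le _ _
    _ ≤ |Lbar| * (volume (A₁ \ A₂)).toReal + |Lbar| * (volume (A₂ \ A₁)).toReal :=
        add_le_add hb1 hb2
    _ = |Lbar| * ((volume (A₁ \ A₂)).toReal + (volume (A₂ \ A₁)).toReal) := by ring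


end Aux

/-- if `L` is `L̄`-Lipschitz (and bounded), then the gradient of the
ball-smoothed function `L_δ` is `(d/δ)·L̄`-Lipschitz. -/
theorem stmt1 (d : ℕ) (hd : 1 ≤ d) (δ : ℝ) (hδ : 0 < δ)
    (L : EuclideanSpace ℝ (Fin d) → ℝ) (Lbar : ℝ)
    (hLip : ∀ x y : EuclideanSpace ℝ (Fin d), |L x - L y| ≤ Lbar * ‖x - y‖)
    (hLbdd : ∃ C : ℝ, ∀ θ, |L θ| ≤ C) :
    ∀ θ₁ θ₂ : EuclideanSpace ℝ (Fin d),
      ‖gradient (fun θ : EuclideanSpace ℝ (Fin d) => ∫ w, L (θ + δ • w) ∂(unifBall d)) θ₁ -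
        gradient (fun θ : EuclideanSpace ℝ (Fin d) => ∫ w, L (θ + δ • w) ∂(unifBall d)) θ₂‖ ≤
      ((d : ℝ) / δ) * Lbar * ‖θ₁ - θ₂‖ := by
  intro θ₁ θ₂
  have hLb0 : 0 ≤ Lbar := Lbar_nonneg hd hLip
  set Vt := (volume (closedBall (0 : EuclideanSpace ℝ (Fin d)) 1)).toReal with hVtdef
  have hVt0 : 0 < Vt := ENNReal.toReal_pos
    (measure_closedBall_pos _ _ one_pos).ne' measure_closedBall_lt_top.ne
  have hg : ∀ θ : EuclideanSpace ℝ (Fin d),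
      gradient (fun θ : EuclideanSpace ℝ (Fin d) =>
        ∫ w, L (θ + δ • w) ∂(unifBall d)) θ =
      Vt⁻¹ • (δ ^ d)⁻¹ • ∫ x in closedBall θ δ, gradient L x := by
    intro θ
    rw [(hasGradientAt_smoothed hδ hLip hLbdd θ).gradient]
    exact integral_unifBall (gradient L) θ hδ
  rw [hg θ₁, hg θ₂, smul_smul, smul_smul, ← smul_sub, norm_smul]
  have hc0 : 0 ≤ Vt⁻¹ * (δ ^ d)⁻¹ := by positivity
  rw [Real.norm_eq_abs, abs_of_nonneg hc0]
  have hsym := symmdiff_bound hd hδ θ₁ θ₂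
  have hint := setIntegral_grad_sub hLip hδ θ₁ θ₂
  have habs : |Lbar| = Lbar := abs_of_nonneg hLb0
  rw [habs] at hint
  set S := (volume (closedBall θ₁ δ \ closedBall θ₂ δ)).toReal
    + (volume (closedBall θ₂ δ \ closedBall θ₁ δ)).toReal with hSdef
  have hδd : δ ^ d = δ ^ (d - 1) * δ := by rw [← pow_succ]; congr 1; omega
  have hdist : dist θ₁ θ₂ = ‖θ₁ - θ₂‖ := dist_eq_norm _ _
  calc (Vt⁻¹ * (δ ^ d)⁻¹) *
        ‖(∫ x in closedBall θ₁ δ, gradient L x) - ∫ x in closedBall θ₂ δ, gradient L x‖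
      ≤ (Vt⁻¹ * (δ ^ d)⁻¹) * (Lbar * S) := by
        apply mul_le_mul_of_nonneg_left hint hc0
    _ ≤ (Vt⁻¹ * (δ ^ d)⁻¹) * (Lbar * (d * ‖θ₁ - θ₂‖ * δ ^ (d - 1) * Vt)) := by
        apply mul_le_mul_of_nonneg_left _ hc0
        apply mul_le_mul_of_nonneg_left _ hLb0
        rw [← hdist]
        exact hsym
    _ = ((d : ℝ) / δ) * Lbar * ‖θ₁ - θ₂‖ := by
        rw [hδd]
        field_simp
end

section
/- Let d ≥ 1, δ > 0, and let L : ℝ^d → ℝ be differentiable with L-Lipschitz gradient, i.e., ‖∇L(θ) − ∇L(θ′)‖ ≤ L‖θ − θ′‖ for all θ, θ′ ∈ ℝ^d. Define L_δ(θ) := E_{w∼Unif(𝔹^d)}[L(θ + δ w)]. Then for every θ ∈ ℝ^d, ‖∇L_δ(θ) − ∇L(θ)‖ ≤ δ L. -/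
open MeasureTheory Metric

/-- for differentiable `L` with `L`-Lipschitz gradient, the smoothed
gradient is an `O(δ)`-biased approximation: `‖∇L_δ(θ) − ∇L(θ)‖ ≤ δL`. -/
theorem stmt4 (d : ℕ) (hd : 1 ≤ d) (δ : ℝ) (hδ : 0 < δ)
    (L : EuclideanSpace ℝ (Fin d) → ℝ) (hdiff : Differentiable ℝ L)
    (Lc : ℝ) (hgradLip : ∀ θ θ' : EuclideanSpace ℝ (Fin d),
      ‖gradient L θ - gradient L θ'‖ ≤ Lc * ‖θ - θ'‖) :
    ∀ θ : EuclideanSpace ℝ (Fin d),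
      ‖gradient (fun θ' : EuclideanSpace ℝ (Fin d) => ∫ w, L (θ' + δ • w) ∂(unifBall d)) θ -
        gradient L θ‖ ≤ δ * Lc := by
  intro θ
  set μ := unifBall d with hμ
  have hc0 : volume (closedBall (0 : EuclideanSpace ℝ (Fin d)) 1) ≠ 0 :=
    (measure_closedBall_pos volume (0 : EuclideanSpace ℝ (Fin d)) one_pos).ne'
  have hctop : volume (closedBall (0 : EuclideanSpace ℝ (Fin d)) 1) ≠ ⊤ :=
    (isCompact_closedBall (0 : EuclideanSpace ℝ (Fin d)) 1).measure_lt_top.ne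
  have hprob : IsProbabilityMeasure μ := by
    constructor
    rw [hμ, unifBall, Measure.smul_apply, Measure.restrict_apply MeasurableSet.univ,
      Set.univ_inter, smul_eq_mul]
    exact ENNReal.inv_mul_cancel hc0 hctop
  -- nonnegativity of Lc
  have hLc : 0 ≤ Lc := by
    have hv : ‖(EuclideanSpace.single (⟨0, hd⟩ : Fin d) (1 : ℝ) :
        EuclideanSpace ℝ (Fin d))‖ = 1 := by simp
    have h := hgradLip 0 (EuclideanSpace.single (⟨0, hd⟩ : Fin d) (1 : ℝ))
    rw [zero_sub, norm_neg, hv, mul_one] at h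
    exact le_trans (norm_nonneg _) h
  -- a.e. bound on ‖w‖
  have hae : ∀ᵐ w ∂μ, ‖w‖ ≤ 1 := by
    rw [hμ, unifBall]
    refine Measure.ae_smul_measure ?_ _
    filter_upwards [ae_restrict_mem (measurableSet_closedBall)] with w hw
    simpa [mem_closedBall_zero_iff] using hw
  -- integrability of continuous functions against μ
  have hint : ∀ {E : Type} [NormedAddCommGroup E] (f : EuclideanSpace ℝ (Fin d) → E),
      Continuous f → Integrable f μ := by
    intro E _ f hf
    rw [hμ, unifBall]
    refine Integrable.smul_measure ?_ (by simp [hc0])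
    exact hf.continuousOn.integrableOn_compact (isCompact_closedBall 0 1)
  -- continuity of the gradient
  have hgc : Continuous (gradient L) := by
    refine (LipschitzWith.of_dist_le_mul (K := ⟨Lc, hLc⟩) (f := gradient L)
      fun x y => ?_).continuous
    rw [dist_eq_norm, dist_eq_norm]
    exact hgradLip x y
  have hfd : ∀ x : EuclideanSpace ℝ (Fin d),
      fderiv ℝ L x = (InnerProductSpace.toDual ℝ (EuclideanSpace ℝ (Fin d))) (gradient L x) := by
    intro x
    rw [gradient, LinearIsometryEquiv.apply_symm_apply]
  have hfc : Continuous fun x : EuclideanSpace ℝ (Fin d) => fderiv ℝ L x := by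
    simp only [hfd]
    exact (InnerProductSpace.toDual ℝ (EuclideanSpace ℝ (Fin d))).continuous.comp hgc
  have hnormfd : ∀ x : EuclideanSpace ℝ (Fin d), ‖fderiv ℝ L x‖ = ‖gradient L x‖ := by
    intro x; rw [hfd]; exact (InnerProductSpace.toDual ℝ (EuclideanSpace ℝ (Fin d))).norm_map _
  have haff : ∀ x : EuclideanSpace ℝ (Fin d),
      Continuous fun w : EuclideanSpace ℝ (Fin d) => x + δ • w :=
    fun x => continuous_const.add (continuous_id.const_smul δ)
  -- the key derivative computation
  have key : HasFDerivAt (fun x : EuclideanSpace ℝ (Fin d) => ∫ w, L (x + δ • w) ∂μ)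
      (∫ w, fderiv ℝ L (θ + δ • w) ∂μ) θ := by
    apply hasFDerivAt_integral_of_dominated_of_fderiv_le
      (F' := fun x w => fderiv ℝ L (x + δ • w))
      (bound := fun _ => ‖gradient L θ‖ + Lc * (1 + δ)) (s := ball θ 1) (ball_mem_nhds θ one_pos)
    · exact Filter.Eventually.of_forall fun x =>
        (hdiff.continuous.comp (haff x)).aestronglyMeasurable
    · exact hint _ (hdiff.continuous.comp (haff θ))
    · exact (hfc.comp (haff θ)).aestronglyMeasurable
    · filter_upwards [hae] with w hw
      intro x hx
      rw [hnormfd]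
      have h1 : ‖gradient L (x + δ • w) - gradient L θ‖ ≤ Lc * ‖x + δ • w - θ‖ :=
        hgradLip (x + δ • w) θ
      have h2 : ‖gradient L (x + δ • w)‖ ≤
          ‖gradient L θ‖ + ‖gradient L (x + δ • w) - gradient L θ‖ := by
        have := norm_add_le (gradient L θ) (gradient L (x + δ • w) - gradient L θ)
        simpa using this
      have h3 : ‖x + δ • w - θ‖ ≤ 1 + δ := by
        have heq : x + δ • w - θ = (x - θ) + δ • w := by abel
        rw [heq]
        refine (norm_add_le _ _).trans ?_
        have hx1 : ‖x - θ‖ ≤ 1 := by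
          rw [← dist_eq_norm]; exact le_of_lt (mem_ball.mp hx)
        have hw1 : ‖δ • w‖ ≤ δ := by
          rw [norm_smul, Real.norm_eq_abs, abs_of_pos hδ]
          nlinarith [norm_nonneg w]
        linarith
      nlinarith
    · exact hint _ continuous_const
    · filter_upwards with w
      intro x _
      have h := (hdiff (x + δ • w)).hasFDerivAt.comp x
        ((hasFDerivAt_id x).add_const (δ • w))
      simpa [Function.comp_def] using h
  -- integrability facts
  have hint1 : Integrable (fun w => gradient L (θ + δ • w)) μ :=
    hint _ (hgc.comp (haff θ))
  -- compute the gradient of the smoothed function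
  have hcomm : (∫ w, fderiv ℝ L (θ + δ • w) ∂μ)
      = (InnerProductSpace.toDual ℝ (EuclideanSpace ℝ (Fin d)))
        (∫ w, gradient L (θ + δ • w) ∂μ) := by
    calc (∫ w, fderiv ℝ L (θ + δ • w) ∂μ)
        = ∫ w, (InnerProductSpace.toDual ℝ
            (EuclideanSpace ℝ (Fin d))).toLinearIsometry (gradient L (θ + δ • w)) ∂μ := by
          simp_rw [hfd]; rfl
      _ = (InnerProductSpace.toDual ℝ (EuclideanSpace ℝ (Fin d))).toLinearIsometry
            (∫ w, gradient L (θ + δ • w) ∂μ) :=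
          LinearIsometry.integral_comp_comm _ _
      _ = (InnerProductSpace.toDual ℝ (EuclideanSpace ℝ (Fin d)))
            (∫ w, gradient L (θ + δ • w) ∂μ) := rfl
  rw [hcomm] at key
  have keygrad : gradient (fun x : EuclideanSpace ℝ (Fin d) => ∫ w, L (x + δ • w) ∂μ) θ
      = ∫ w, gradient L (θ + δ • w) ∂μ :=
    (hasGradientAt_iff_hasFDerivAt.mpr key).gradient
  rw [keygrad]
  have hconst : (∫ _w, gradient L θ ∂μ) = gradient L θ := by
    simp [measure_univ]
  rw [← hconst, ← integral_sub hint1 (hint _ continuous_const)]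
  refine (norm_integral_le_of_norm_le (μ := μ) (g := fun _ => δ * Lc)
    (hint _ continuous_const) ?_).trans ?_
  · filter_upwards [hae] with w hw
    refine (hgradLip (θ + δ • w) θ).trans ?_
    have heq : θ + δ • w - θ = δ • w := by abel
    rw [heq, norm_smul, Real.norm_eq_abs, abs_of_pos hδ]
    nlinarith [mul_nonneg (mul_nonneg hδ.le hLc) (sub_nonneg.mpr hw)]
  · simp [measure_univ]
end

section
/- Let Z be a measurable space, ℓ : ℝ^d × Z → ℝ a measurable loss with |ℓ(θ; z)| ≤ G for all θ ∈ ℝ^d and z ∈ Z, and (Π_θ)_{θ∈ℝ^d} a family of probability measures on Z. Define the performative risk L(θ) := E_{Z∼Π_θ}[ℓ(θ; Z)] and assume L is differentiable with L-Lipschitz gradient. Assume further that the distribution map is Lipschitz in total variation: d_TV(Π_{θ₁}, Π_{θ₂}) ≤ L₁‖θ₁ − θ₂‖ for all θ₁, θ₂ ∈ ℝ^d. Then for all θ₁, θ₂ ∈ ℝ^d, |E_{Z∼Π_{θ₂}}[ℓ(θ₁; Z) − ℓ(θ₂; Z)]| ≤ 2(G L₁ + √(L G))‖θ₁ − θ₂‖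 + (L/2)‖θ₁ − θ₂‖². -/
open MeasureTheory
open scoped ENNReal

/-- Total variation distance `d_TV(μ, ν) = sup_{A measurable} (μ(A) − ν(A))`. -/
noncomputable def dTV {Z : Type*} [MeasurableSpace Z] (μ ν : Measure Z) : ℝ :=
  ⨆ A : {A : Set Z // MeasurableSet A}, ((μ A.1).toReal - (ν A.1).toReal)

section Aux

variable {Z : Type*} [MeasurableSpace Z]

lemma dTV_bdd (μ ν : Measure Z) [IsProbabilityMeasure μ] :
    BddAbove (Set.range fun A : {A : Set Z // MeasurableSet A} =>
      ((μ A.1).toReal - (ν A.1).toReal)) := by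
  refine ⟨1, ?_⟩
  rintro x ⟨A, rfl⟩
  have h1 : (μ A.1).toReal ≤ (1 : ℝ≥0∞).toReal :=
    ENNReal.toReal_mono (by simp) prob_le_one
  have h2 : 0 ≤ (ν A.1).toReal := ENNReal.toReal_nonneg
  simp only [ENNReal.toReal_one] at h1
  dsimp only
  linarith

lemma dTV_nonneg (μ ν : Measure Z) [IsProbabilityMeasure μ] : 0 ≤ dTV μ ν := by
  have h := le_ciSup (dTV_bdd μ ν) (⟨∅, MeasurableSet.empty⟩ : {A : Set Z // MeasurableSet A})
  simpa [dTV] using h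

lemma integral_sub_le_dTV (μ ν : Measure Z) [IsProbabilityMeasure μ] [IsProbabilityMeasure ν]
    (f : Z → ℝ) (hf : Measurable f) (G : ℝ) (hbdd : ∀ z, |f z| ≤ G) :
    ∫ z, f z ∂μ - ∫ z, f z ∂ν ≤ 2 * G * dTV μ ν := by
  have hZ : Nonempty Z := by
    by_contra h
    have h0 : μ Set.univ = 0 := by
      rw [Set.univ_eq_empty_iff.mpr (not_nonempty_iff.mp h)]
      simp
    rw [measure_univ] at h0
    exact one_ne_zero h0
  have hG : 0 ≤ G := le_trans (abs_nonneg _) (hbdd (Classical.arbitrary Z))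
  set g : Z → ℝ := fun z => f z + G with hg
  have hgm : Measurable g := hf.add_const G
  have hg_nn : ∀ z, 0 ≤ g z := fun z => by
    have := (abs_le.mp (hbdd z)).1; simp only [hg]; linarith
  have hg_le : ∀ z, g z ≤ 2 * G := fun z => by
    have := (abs_le.mp (hbdd z)).2; simp only [hg]; linarith
  have hfint : ∀ (κ : Measure Z) [IsProbabilityMeasure κ], Integrable f κ := by
    intro κ _
    exact ⟨hf.aestronglyMeasurable, HasFiniteIntegral.of_bounded (C := G)
      (Filter.Eventually.of_forall fun z => by simpa [Real.norm_eq_abs] using hbdd z)⟩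
  have hgint : ∀ (κ : Measure Z) [IsProbabilityMeasure κ], Integrable g κ := by
    intro κ _
    exact (hfint κ).add (integrable_const G)
  -- layer cake
  have hlayer : ∀ (κ : Measure Z) [IsProbabilityMeasure κ],
      ∫ z, g z ∂κ = ∫ t in Set.Ioc 0 (2 * G), (κ {a | t ≤ g a}).toReal := by
    intro κ _
    exact (hgint κ).integral_eq_integral_Ioc_meas_le
      (Filter.Eventually.of_forall hg_nn) (Filter.Eventually.of_forall hg_le)
  have hmeas_t : ∀ (κ : Measure Z),
      Measurable (fun t : ℝ => (κ {a | t ≤ g a}).toReal) := by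
    intro κ
    refine Measurable.ennreal_toReal (Antitone.measurable ?_)
    intro s t hst
    exact measure_mono (fun a ha => le_trans hst ha)
  have hIoc_int : ∀ (κ : Measure Z) [IsProbabilityMeasure κ],
      IntegrableOn (fun t : ℝ => (κ {a | t ≤ g a}).toReal) (Set.Ioc 0 (2 * G)) := by
    intro κ _
    refine ⟨(hmeas_t κ).aestronglyMeasurable, ?_⟩
    refine HasFiniteIntegral.of_bounded (C := 1) (Filter.Eventually.of_forall fun t => ?_)
    rw [Real.norm_eq_abs, abs_of_nonneg ENNReal.toReal_nonneg]
    have : (κ {a | t ≤ g a}).toReal ≤ (1 : ℝ≥0∞).toReal :=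
      ENNReal.toReal_mono (by simp) prob_le_one
    simpa using this
  have hpt : ∀ t : ℝ, (μ {a | t ≤ g a}).toReal - (ν {a | t ≤ g a}).toReal ≤ dTV μ ν := by
    intro t
    have hA : MeasurableSet {a | t ≤ g a} := hgm measurableSet_Ici
    exact le_ciSup (dTV_bdd μ ν) (⟨{a | t ≤ g a}, hA⟩ : {A : Set Z // MeasurableSet A})
  have key : ∫ z, g z ∂μ - ∫ z, g z ∂ν ≤ 2 * G * dTV μ ν := by
    rw [hlayer μ, hlayer ν, ← integral_sub (hIoc_int μ) (hIoc_int ν)]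
    calc ∫ t in Set.Ioc 0 (2 * G),
          ((μ {a | t ≤ g a}).toReal - (ν {a | t ≤ g a}).toReal)
        ≤ ∫ _t in Set.Ioc 0 (2 * G), dTV μ ν := by
          refine setIntegral_mono_on ((hIoc_int μ).sub (hIoc_int ν))
            (integrableOn_const measure_Ioc_lt_top.ne) measurableSet_Ioc
            (fun t _ => hpt t)
      _ = 2 * G * dTV μ ν := by
          rw [setIntegral_const, Real.volume_real_Ioc_of_le (by linarith), smul_eq_mul]
          ring
  have heq : ∀ (κ : Measure Z) [IsProbabilityMeasure κ],
      ∫ z, g z ∂κ = (∫ z, f z ∂κ) + G := by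
    intro κ _
    rw [integral_add (hfint κ) (integrable_const G), integral_const]
    simp
  rw [heq μ, heq ν] at key
  linarith

end Aux

section Descent

variable {d : ℕ}

local notation "E" => EuclideanSpace ℝ (Fin d)

/-- The descent lemma: a differentiable function with `L`-Lipschitz gradient satisfies
`|F (x+v) - F x - ⟪∇F x, v⟫| ≤ L/2 ‖v‖²`. -/
lemma descent_lemma (F : E → ℝ) (hF : Differentiable ℝ F) (L : ℝ) (hL : 0 ≤ L)
    (hLip : ∀ a b : E, ‖gradient F a - gradient F b‖ ≤ L * ‖a - b‖)
    (x v : E) :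
    |F (x + v) - F x - (inner ℝ (gradient F x) v : ℝ)| ≤ L / 2 * ‖v‖ ^ 2 := by
  have hgcont : Continuous (fun y : E => gradient F y) := by
    have hlw : LipschitzWith (Real.toNNReal L) (fun y : E => gradient F y) := by
      apply LipschitzWith.of_dist_le_mul
      intro a b
      rw [dist_eq_norm, dist_eq_norm]
      calc ‖gradient F a - gradient F b‖ ≤ L * ‖a - b‖ := hLip a b
        _ = (Real.toNNReal L : ℝ) * ‖a - b‖ := by rw [Real.coe_toNNReal L hL]
    exact hlw.continuous
  set c : ℝ → E := fun t => x + t • v with hc_def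
  have hc : Continuous c := by
    exact continuous_const.add (continuous_id.smul continuous_const)
  have hderiv : ∀ t : ℝ, HasDerivAt (fun s => F (c s)) (inner ℝ (gradient F (c t)) v : ℝ) t := by
    intro t
    have h1 : HasDerivAt c v t := by
      exact (((hasDerivAt_id t).smul_const v).const_add x).congr_deriv (one_smul ℝ v)
    have h2 := ((hF (c t)).hasGradientAt.hasFDerivAt).comp_hasDerivAt t h1
    exact h2
  have hcont : Continuous (fun t : ℝ => (inner ℝ (gradient F (c t)) v : ℝ)) :=
    (hgcont.comp hc).inner continuous_const
  have hFTC : ∫ t in (0:ℝ)..1, (inner ℝ (gradient F (c t)) v : ℝ) = F (x + v) - F x := by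
    have h := intervalIntegral.integral_eq_sub_of_hasDerivAt (a := (0:ℝ)) (b := 1)
      (fun t _ => hderiv t) (hcont.intervalIntegrable 0 1)
    simpa [hc_def] using h
  have key : F (x + v) - F x - (inner ℝ (gradient F x) v : ℝ)
      = ∫ t in (0:ℝ)..1, ((inner ℝ (gradient F (c t)) v : ℝ) - (inner ℝ (gradient F x) v : ℝ)) := by
    rw [intervalIntegral.integral_sub (hcont.intervalIntegrable 0 1)
      (intervalIntegrable_const), hFTC]
    simp
  rw [key]
  have hbound : ∀ t ∈ Set.Icc (0:ℝ) 1,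
      |(inner ℝ (gradient F (c t)) v : ℝ) - (inner ℝ (gradient F x) v : ℝ)|
        ≤ (L * ‖v‖ ^ 2) * t := by
    intro t ht
    have hsub : (inner ℝ (gradient F (c t)) v : ℝ) - (inner ℝ (gradient F x) v : ℝ)
        = (inner ℝ (gradient F (c t) - gradient F x) v : ℝ) := (inner_sub_left _ _ _).symm
    rw [hsub]
    have hct : c t - x = t • v := by simp [hc_def]
    calc |(inner ℝ (gradient F (c t) - gradient F x) v : ℝ)|
        ≤ ‖gradient F (c t) - gradient F x‖ * ‖v‖ := abs_real_inner_le_norm _ _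
      _ ≤ (L * ‖c t - x‖) * ‖v‖ :=
          mul_le_mul_of_nonneg_right (hLip _ _) (norm_nonneg v)
      _ = (L * ‖v‖ ^ 2) * t := by
          rw [hct, norm_smul, Real.norm_eq_abs, abs_of_nonneg ht.1]
          ring
  calc |∫ t in (0:ℝ)..1, ((inner ℝ (gradient F (c t)) v : ℝ) - (inner ℝ (gradient F x) v : ℝ))|
      ≤ ∫ t in (0:ℝ)..1, |(inner ℝ (gradient F (c t)) v : ℝ) - (inner ℝ (gradient F x) v : ℝ)| :=
        intervalIntegral.abs_integral_le_integral_abs (by norm_num)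
    _ ≤ ∫ t in (0:ℝ)..1, (L * ‖v‖ ^ 2) * t := by
        refine intervalIntegral.integral_mono_on (by norm_num) ?_ ?_ hbound
        · exact ((hcont.sub continuous_const).abs).intervalIntegrable 0 1
        · exact (continuous_const.mul continuous_id).intervalIntegrable 0 1
    _ = L / 2 * ‖v‖ ^ 2 := by
        rw [intervalIntegral.integral_const_mul, integral_id]
        ring

lemma grad_bound (F : E → ℝ) (hF : Differentiable ℝ F) (L G : ℝ) (hL : 0 ≤ L) (hG : 0 ≤ G)
    (hLip : ∀ a b : E, ‖gradient F a - gradient F b‖ ≤ L * ‖a - b‖)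
    (hbdd : ∀ x, |F x| ≤ G) (x : E) :
    ‖gradient F x‖ ≤ 2 * Real.sqrt (L * G) := by
  set g : E := gradient F x with hgdef
  have hsq : ‖g‖ ^ 2 ≤ 4 * (L * G) := by
    rcases eq_or_lt_of_le hL with hL0 | hLpos
    · -- L = 0 : gradient must vanish
      have hlin : ∀ t : ℝ, F (x + t • g) - F x = t * ‖g‖ ^ 2 := by
        intro t
        have h := descent_lemma F hF L hL hLip x (t • g)
        rw [← hL0] at h
        have hin : (inner ℝ g (t • g) : ℝ) = t * ‖g‖ ^ 2 := by
          rw [real_inner_smul_right, real_inner_self_eq_norm_sq]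
        simp only [zero_div, zero_mul, abs_nonpos_iff, sub_eq_zero] at h
        rw [h, hin]
      have hg0 : ‖g‖ ^ 2 = 0 := by
        by_contra hne
        have hpos : 0 < ‖g‖ ^ 2 := lt_of_le_of_ne (sq_nonneg _) (Ne.symm hne)
        have hbig := hlin ((2 * G + 1) / ‖g‖ ^ 2)
        have h1 : |F (x + ((2 * G + 1) / ‖g‖ ^ 2) • g) - F x| ≤ 2 * G := by
          have := hbdd (x + ((2 * G + 1) / ‖g‖ ^ 2) • g)
          have := hbdd x
          calc |F (x + ((2 * G + 1) / ‖g‖ ^ 2) • g) - F x|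
              ≤ |F (x + ((2 * G + 1) / ‖g‖ ^ 2) • g)| + |F x| := abs_sub _ _
            _ ≤ 2 * G := by linarith [hbdd (x + ((2 * G + 1) / ‖g‖ ^ 2) • g), hbdd x]
        rw [hbig, div_mul_cancel₀ _ (ne_of_gt hpos)] at h1
        have : (2 : ℝ) * G + 1 ≤ 2 * G := le_trans (le_abs_self _) h1
        linarith
      rw [hg0, ← hL0]; linarith
    · -- L > 0
      set v : E := -(L⁻¹ • g) with hvdef
      have h := descent_lemma F hF L hL hLip x v
      have hin : (inner ℝ g v : ℝ) = -(L⁻¹ * ‖g‖ ^ 2) := by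
        rw [hvdef, inner_neg_right, real_inner_smul_right, real_inner_self_eq_norm_sq]
      have hnv : ‖v‖ ^ 2 = L⁻¹ ^ 2 * ‖g‖ ^ 2 := by
        rw [hvdef, norm_neg, norm_smul, Real.norm_eq_abs, abs_of_nonneg (inv_nonneg.mpr hL)]
        ring
      have hup : F (x + v) - F x ≤ (inner ℝ g v : ℝ) + L / 2 * ‖v‖ ^ 2 := by
        have := (abs_le.mp h).2; linarith
      rw [hin, hnv] at hup
      have hdiff2 : F x - F (x + v) ≤ 2 * G := by
        calc F x - F (x + v) ≤ |F x - F (x + v)| := le_abs_self _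
          _ ≤ |F x| + |F (x + v)| := abs_sub _ _
          _ ≤ 2 * G := by linarith [hbdd x, hbdd (x + v)]
      have hLne : L ≠ 0 := ne_of_gt hLpos
      have hsimp : L / 2 * (L⁻¹ ^ 2 * ‖g‖ ^ 2) = L⁻¹ * ‖g‖ ^ 2 / 2 := by
        field_simp
      rw [hsimp] at hup
      have hstep : L⁻¹ * ‖g‖ ^ 2 ≤ 4 * G := by linarith
      calc ‖g‖ ^ 2 = L * (L⁻¹ * ‖g‖ ^ 2) := by
            rw [← mul_assoc, mul_inv_cancel₀ hLne, one_mul]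
        _ ≤ L * (4 * G) := mul_le_mul_of_nonneg_left hstep hL
        _ = 4 * (L * G) := by ring
  have h1 : ‖g‖ ≤ Real.sqrt (4 * (L * G)) := by
    have := Real.sqrt_le_sqrt hsq
    rwa [Real.sqrt_sq (norm_nonneg g)] at this
  have h2 : Real.sqrt (4 * (L * G)) = 2 * Real.sqrt (L * G) := by
    rw [show (4 : ℝ) * (L * G) = 2 ^ 2 * (L * G) by ring, Real.sqrt_mul (by positivity),
      Real.sqrt_sq (by norm_num)]
  rwa [h2] at h1

end Descent

/-- Lipschitz continuity of the decoupled risk: under boundedness of the loss,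
smoothness of the performative risk and total-variation Lipschitzness of the
distribution map, `|E_{Z∼Π_{θ₂}}[ℓ(θ₁;Z) − ℓ(θ₂;Z)]| ≤ 2(GL₁+√(LG))‖θ₁−θ₂‖ + (L/2)‖θ₁−θ₂‖²`. -/
theorem stmt6 (d : ℕ) {Z : Type*} [MeasurableSpace Z]
    (ℓ : EuclideanSpace ℝ (Fin d) → Z → ℝ)
    (hℓmeas : Measurable (Function.uncurry ℓ))
    (G : ℝ) (hℓbdd : ∀ θ z, |ℓ θ z| ≤ G)
    (P : EuclideanSpace ℝ (Fin d) → Measure Z)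
    (hP : ∀ θ, IsProbabilityMeasure (P θ))
    (L : ℝ)
    (hdiff : Differentiable ℝ (fun θ : EuclideanSpace ℝ (Fin d) => ∫ z, ℓ θ z ∂(P θ)))
    (hgradLip : ∀ θ θ' : EuclideanSpace ℝ (Fin d),
      ‖gradient (fun θ'' : EuclideanSpace ℝ (Fin d) => ∫ z, ℓ θ'' z ∂(P θ'')) θ -
        gradient (fun θ'' : EuclideanSpace ℝ (Fin d) => ∫ z, ℓ θ'' z ∂(P θ'')) θ'‖ ≤
          L * ‖θ - θ'‖)
    (L₁ : ℝ)
    (hTV : ∀ θ₁ θ₂ : EuclideanSpace ℝ (Fin d), dTV (P θ₁) (P θ₂) ≤ L₁ * ‖θ₁ - θ₂‖) :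
    ∀ θ₁ θ₂ : EuclideanSpace ℝ (Fin d),
      |∫ z, (ℓ θ₁ z - ℓ θ₂ z) ∂(P θ₂)| ≤
        2 * (G * L₁ + Real.sqrt (L * G)) * ‖θ₁ - θ₂‖ + (L / 2) * ‖θ₁ - θ₂‖ ^ 2 := by
  intro θ₁ θ₂
  haveI := hP θ₁; haveI := hP θ₂
  have hZ : Nonempty Z := by
    by_contra h
    have h0 : P θ₁ Set.univ = 0 := by
      rw [Set.univ_eq_empty_iff.mpr (not_nonempty_iff.mp h)]; simp
    rw [measure_univ] at h0
    exact one_ne_zero h0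
  have hG : 0 ≤ G := le_trans (abs_nonneg _) (hℓbdd θ₁ (Classical.arbitrary Z))
  by_cases heq : θ₁ = θ₂
  · subst heq
    simp [sub_self]
  have hne : θ₁ - θ₂ ≠ 0 := sub_ne_zero.mpr heq
  have hnorm : 0 < ‖θ₁ - θ₂‖ := norm_pos_iff.mpr hne
  have hL : 0 ≤ L := by
    have h1 := le_trans (norm_nonneg _) (hgradLip θ₁ θ₂)
    nlinarith
  have hL₁ : 0 ≤ L₁ := by
    have h1 := le_trans (dTV_nonneg (P θ₁) (P θ₂)) (hTV θ₁ θ₂)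
    nlinarith
  have hmeas : ∀ θ, Measurable (ℓ θ) := fun θ => hℓmeas.comp measurable_prodMk_left
  have hint : ∀ θ θ', Integrable (ℓ θ) (P θ') := by
    intro θ θ'
    haveI := hP θ'
    exact ⟨(hmeas θ).aestronglyMeasurable, HasFiniteIntegral.of_bounded (C := G)
      (Filter.Eventually.of_forall fun z => by simpa [Real.norm_eq_abs] using hℓbdd θ z)⟩
  set Risk : EuclideanSpace ℝ (Fin d) → ℝ := fun θ => ∫ z, ℓ θ z ∂(P θ) with hRisk
  have hRbdd : ∀ θ, |Risk θ| ≤ G := by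
    intro θ
    haveI := hP θ
    calc |∫ z, ℓ θ z ∂(P θ)| ≤ ∫ z, |ℓ θ z| ∂(P θ) := by
          simpa [Real.norm_eq_abs] using norm_integral_le_integral_norm (μ := P θ) (ℓ θ)
      _ ≤ ∫ _z, G ∂(P θ) := integral_mono (hint θ θ).abs (integrable_const G) (hℓbdd θ)
      _ = G := by simp
  -- gradient bound
  have hgb : ‖gradient Risk θ₂‖ ≤ 2 * Real.sqrt (L * G) :=
    grad_bound Risk hdiff L G hL hG hgradLip hRbdd θ₂
  -- smoothness bound
  have hsmooth : |Risk θ₁ - Risk θ₂|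
      ≤ ‖gradient Risk θ₂‖ * ‖θ₁ - θ₂‖ + L / 2 * ‖θ₁ - θ₂‖ ^ 2 := by
    have hd := descent_lemma Risk hdiff L hL hgradLip θ₂ (θ₁ - θ₂)
    have hadd : θ₂ + (θ₁ - θ₂) = θ₁ := by abel
    rw [hadd] at hd
    have hcs : |(inner ℝ (gradient Risk θ₂) (θ₁ - θ₂) : ℝ)|
        ≤ ‖gradient Risk θ₂‖ * ‖θ₁ - θ₂‖ := abs_real_inner_le_norm _ _
    calc |Risk θ₁ - Risk θ₂|
        ≤ |Risk θ₁ - Risk θ₂ - (inner ℝ (gradient Risk θ₂) (θ₁ - θ₂) : ℝ)|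
          + |(inner ℝ (gradient Risk θ₂) (θ₁ - θ₂) : ℝ)| := by
            have := abs_add_le (Risk θ₁ - Risk θ₂ - (inner ℝ (gradient Risk θ₂) (θ₁ - θ₂) : ℝ))
              ((inner ℝ (gradient Risk θ₂) (θ₁ - θ₂) : ℝ))
            simpa using this
      _ ≤ ‖gradient Risk θ₂‖ * ‖θ₁ - θ₂‖ + L / 2 * ‖θ₁ - θ₂‖ ^ 2 := by linarith
  -- total variation bound
  have hTV1 : ∫ z, ℓ θ₁ z ∂(P θ₂) - ∫ z, ℓ θ₁ z ∂(P θ₁) ≤ 2 * G * (L₁ * ‖θ₁ - θ₂‖) := by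
    refine le_trans (integral_sub_le_dTV (P θ₂) (P θ₁) (ℓ θ₁) (hmeas θ₁) G (hℓbdd θ₁)) ?_
    have h := hTV θ₂ θ₁
    rw [norm_sub_rev] at h
    nlinarith
  have hTV2 : ∫ z, ℓ θ₁ z ∂(P θ₁) - ∫ z, ℓ θ₁ z ∂(P θ₂) ≤ 2 * G * (L₁ * ‖θ₁ - θ₂‖) := by
    refine le_trans (integral_sub_le_dTV (P θ₁) (P θ₂) (ℓ θ₁) (hmeas θ₁) G (hℓbdd θ₁)) ?_
    have h := hTV θ₁ θ₂
    nlinarith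
  have hTVabs : |∫ z, ℓ θ₁ z ∂(P θ₂) - ∫ z, ℓ θ₁ z ∂(P θ₁)| ≤ 2 * G * (L₁ * ‖θ₁ - θ₂‖) :=
    abs_le.mpr ⟨by linarith, hTV1⟩
  -- decomposition
  have hsplit : ∫ z, (ℓ θ₁ z - ℓ θ₂ z) ∂(P θ₂)
      = (∫ z, ℓ θ₁ z ∂(P θ₂) - ∫ z, ℓ θ₁ z ∂(P θ₁)) + (Risk θ₁ - Risk θ₂) := by
    rw [integral_sub (hint θ₁ θ₂) (hint θ₂ θ₂)]
    simp only [hRisk]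
    ring
  rw [hsplit]
  have habs := abs_add_le (∫ z, ℓ θ₁ z ∂(P θ₂) - ∫ z, ℓ θ₁ z ∂(P θ₁)) (Risk θ₁ - Risk θ₂)
  have hsqrt : 0 ≤ Real.sqrt (L * G) := Real.sqrt_nonneg _
  nlinarith [hnorm.le, hgb, hsmooth, hTVabs, habs]
end
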